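/- Britton's lemma: in an HNN extension Γ = HNN(G, H, θ), any reduced word g₁τ^{ε₁}g₂τ^{ε₂}⋯g_nτ^{ε_n}g_{n+1} with n ≥ 1 represents a non-identity element of Γ; in particular such an element does not lie in (the image of) G. -/

import Mathlib

namespace HNNStmt

open HNNExtension

variable {G : Type*} [Group G] (A B : Subgroup G) (φ : A ≃* B)

/-- The stable letter `τ` of the paper's convention: `τ⁻¹ h τ = θ(h)` for `h ∈ H = A`,
where `θ = φ`. In Mathlib's `HNNExtension`, `t * of a * t⁻¹ = of (φ a)`, so `τ = t⁻¹`. -/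
def τ : HNNExtension G A B φ := (t : HNNExtension G A B φ)⁻¹

/-- `H₋₁ = H = A` and `H₁ = θ(H) = B`. -/
def Hsub (ε : ℤ) : Subgroup G := if ε = 1 then B else A

/-- The word `g₁ τ^{ε₁} g₂ τ^{ε₂} ⋯ g_n τ^{ε_n} g_{n+1}` (zero-based indexing). -/
def wordProd (gs : ℕ → G) (εs : ℕ → ℤ) (n : ℕ) : HNNExtension G A B φ :=
  ((List.range n).map (fun i => of (gs i) * (τ A B φ) ^ (εs i))).prod * of (gs n)

/-- All exponents are `±1`. -/
def IsSign (εs : ℕ → ℤ) (n : ℕ) : Prop := ∀ i < n, εs i = 1 ∨ εs i = -1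

/-- The word `g₁ τ^{ε₁} ⋯ g_n τ^{ε_n} g_{n+1}` is reduced: whenever `ε_{i+1} = -ε_i`,
the letter `g_{i+1} ∉ H_{ε_i}`. -/
def Reduced (gs : ℕ → G) (εs : ℕ → ℤ) (n : ℕ) : Prop :=
  ∀ i : ℕ, i + 1 < n → εs (i + 1) = -εs i → gs (i + 1) ∉ Hsub A B (εs i)

/-- `T_ε^†`: the set of elements of length `≥ 1`, type `ε`, and initial letter `1`,
described via reduced words: `g` admits a reduced expression with first exponent `ε`
and first letter lying in `H_{-ε}`. -/
def Tdag (ε : ℤ) : Set (HNNExtension G A B φ) :=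
  {g | ∃ (n : ℕ) (gs : ℕ → G) (εs : ℕ → ℤ), 1 ≤ n ∧ IsSign εs n ∧
    Reduced A B gs εs n ∧ g = wordProd A B φ gs εs n ∧ εs 0 = ε ∧ gs 0 ∈ Hsub A B (-ε)}

/-- The quasi-kernel `K_ε = ⋂_{r ∈ Γ \ T_ε^†} r H r⁻¹`. -/
def K (ε : ℤ) : Subgroup (HNNExtension G A B φ) :=
  ⨅ (r : HNNExtension G A B φ) (_ : r ∉ Tdag A B φ ε),
    (A.map (of : G →* HNNExtension G A B φ)).map (MulAut.conj r).toMonoidHom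

end HNNStmt

open HNNExtension HNNStmt

section Britton

variable {G : Type*} [Group G] (A B : Subgroup G) (φ : A ≃* B)

private def us (εs : ℕ → ℤ) (i : ℕ) : ℤˣ := if εs i = 1 then -1 else 1

private lemma us_coe {εs : ℕ → ℤ} {n i : ℕ} (hsign : IsSign εs n) (hi : i < n) :
    ((us εs i : ℤˣ) : ℤ) = -εs i := by
  rcases hsign i hi with h | h <;> simp [us, h]

private lemma us_inj {εs : ℕ → ℤ} {n i j : ℕ} (hsign : IsSign εs n) (hi : i < n)
    (hj : j < n) (h : us εs i ≠ us εs j) : εs j = -εs i := by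
  rcases hsign i hi with h1 | h1 <;> rcases hsign j hj with h2 | h2 <;>
    simp_all [us]

private lemma prod_eq (gs : ℕ → G) (εs : ℕ → ℤ) (n : ℕ) (hsign : IsSign εs n) :
    wordProd A B φ gs εs n =
      of (gs 0) *
        ((List.range n).map
          (fun i => (t : HNNExtension G A B φ) ^ ((us εs i : ℤˣ) : ℤ) * of (gs (i + 1)))).prod := by
  induction n with
  | zero => simp [wordProd]
  | succ m ih =>
    have hs : IsSign εs m := fun i hi => hsign i (hi.trans (Nat.lt_succ_self m))
    have hτ : (τ A B φ) ^ (εs m) = (t : HNNExtension G A B φ) ^ ((us εs m : ℤˣ) : ℤ) := by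
      rw [us_coe hsign (Nat.lt_succ_self m), τ, inv_zpow, ← zpow_neg]
    have ih' := ih hs
    simp only [wordProd, List.range_succ, List.map_append, List.prod_append,
      List.map_cons, List.map_nil, List.prod_cons, List.prod_nil, mul_one] at ih' ⊢
    rw [hτ]
    set L := ((List.range m).map (fun i => of (gs i) * (τ A B φ) ^ (εs i))).prod with hL
    set X := (t : HNNExtension G A B φ) ^ ((us εs m : ℤˣ) : ℤ) * of (gs (m + 1)) with hX
    calc L * (of (gs m) * ((t : HNNExtension G A B φ) ^ ((us εs m : ℤˣ) : ℤ))) * of (gs (m+1))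
        = (L * of (gs m)) * X := by rw [hX]; noncomm_ring
      _ = of (gs 0) *
          (((List.range m).map
            (fun i => (t : HNNExtension G A B φ) ^ ((us εs i : ℤˣ) : ℤ) * of (gs (i + 1)))).prod
            * X) := by rw [ih', mul_assoc]

private def brw (gs : ℕ → G) (εs : ℕ → ℤ) (n : ℕ) (hsign : IsSign εs n)
    (hred : Reduced A B gs εs n) : HNNExtension.NormalWord.ReducedWord G A B where
  head := gs 0
  toList := (List.range n).map (fun i => (us εs i, gs (i + 1)))
  chain := by
    rcases n with _ | m
    · simp
    · rw [List.isChain_map, List.isChain_range_succ]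
      intro i hi hmem
      by_contra hne
      have hεi : εs (i+1) = -εs i :=
        us_inj hsign (Nat.lt_succ_of_lt hi) (Nat.succ_lt_succ hi) hne
      refine hred i (Nat.succ_lt_succ hi) hεi ?_
      have hlt : i < m + 1 := Nat.lt_succ_of_lt hi
      rcases hsign i hlt with h | h <;>
        simpa [Hsub, HNNExtension.toSubgroup, us, h] using hmem

theorem britton_range (n : ℕ) (hn : 1 ≤ n) (gs : ℕ → G) (εs : ℕ → ℤ)
    (hsign : IsSign εs n) (hred : Reduced A B gs εs n) :
    wordProd A B φ gs εs n ∉ (of : G →* HNNExtension G A B φ).range := by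
  intro hmem
  have hprod : (brw A B gs εs n hsign hred).prod φ = wordProd A B φ gs εs n := by
    rw [HNNExtension.NormalWord.ReducedWord.prod, prod_eq A B φ gs εs n hsign, brw]
    simp [List.map_map, Function.comp_def]
  obtain ⟨g, hg⟩ := hmem
  have hnil := HNNExtension.ReducedWord.toList_eq_nil_of_mem_of_range φ
    (brw A B gs εs n hsign hred) (by rw [hprod, ← hg]; exact ⟨g, rfl⟩)
  have : ((List.range n).map (fun i => (us εs i, gs (i + 1)))).length = 0 := by
    rw [show ((List.range n).map (fun i => (us εs i, gs (i + 1)))) =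
      (brw A B gs εs n hsign hred).toList from rfl, hnil]; rfl
  simp at this
  omega

end Britton


/-- Britton's lemma: in an HNN extension `Γ = HNN(G, H, θ)`, any reduced
word `g₁τ^{ε₁}⋯g_nτ^{ε_n}g_{n+1}` with `n ≥ 1` is a non-identity element; in particular
it does not lie in the image of `G`. -/
theorem stmt_12 {G : Type*} [Group G] (A B : Subgroup G) (φ : A ≃* B)
    (n : ℕ) (hn : 1 ≤ n) (gs : ℕ → G) (εs : ℕ → ℤ)
    (hsign : IsSign εs n) (hred : Reduced A B gs εs n) :
    wordProd A B φ gs εs n ≠ 1 ∧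
      wordProd A B φ gs εs n ∉ (of : G →* HNNExtension G A B φ).range := by
  have h2 := britton_range A B φ n hn gs εs hsign hred
  exact ⟨fun h => h2 (h ▸ ⟨1, map_one _⟩), h2⟩
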